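/- Let T_C be a complete binary tree with left subtree T_C' and right subtree T_C''. Then the set of successive leaf transitions satisfies S(T_C) = S(T_C') ∪ S(T_C'') ∪ (B_r(T_C') × B_l(T_C'')). -/

import Mathlib

/-- Full binary trees: every vertex has 0 or 2 children. -/
inductive FBT where
  | leaf : FBT
  | node : FBT → FBT → FBT
deriving DecidableEq

namespace FBT

/-- Depth of a full binary tree. -/
def depth : FBT → ℕ
  | leaf => 0
  | node a b => max a.depth b.depth + 1

/-- Positions (reversed root-paths: head is the edge nearest the vertex) of the
leaves of `T`, in left-to-right order. -/
def leaves : FBT → List (List Bool)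
  | leaf => [[]]
  | node a b => a.leaves.map (· ++ [false]) ++ b.leaves.map (· ++ [true])

/-- Total number of vertices. -/
def numNodes : FBT → ℕ
  | leaf => 1
  | node a b => a.numNodes + b.numNodes + 1

/-- Number of internal (non-leaf) vertices. -/
def internals : FBT → ℕ
  | leaf => 0
  | node a b => a.internals + b.internals + 1

/-- The recursive probability function π of the stick-breaking prior:
`pi l T pos` where `pos` is the (reversed) position of the root of `T`. -/
def pi (l : List Bool → ℝ) : FBT → List Bool → ℝ
  | leaf, pos => l pos
  | node a b, pos => (1 - l pos) * pi l a (false :: pos) * pi l b (true :: pos)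

/-- Probability of an internal tree: `p(T) = π(root)`. -/
def pTree (l : List Bool → ℝ) (T : FBT) : ℝ := pi l T []

/-- The memoized value m̃, with `m̃(parent(root)) = 1`. -/
noncomputable def mt (l : List Bool → ℝ) : List Bool → ℝ
  | [] => 1 - l []
  | (b :: p) => Real.sqrt (mt l p) * (1 - l (b :: p))

/-- The memoized value m at a vertex: `m(v) = m̃(parent v)^(1/2) · l v`. -/
noncomputable def mleaf (l : List Bool → ℝ) : List Bool → ℝ
  | [] => l []
  | (b :: p) => Real.sqrt (mt l p) * l (b :: p)

/-- `m̃(parent v)`, with the convention `m̃(parent root) = 1`. -/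
noncomputable def mparent (l : List Bool → ℝ) : List Bool → ℝ
  | [] => 1
  | (_ :: p) => mt l p

/-- The set of internal trees of the complete binary tree of depth `D`,
i.e. full binary trees of depth at most `D`. -/
def trees : ℕ → Finset FBT
  | 0 => {leaf}
  | (D+1) => insert leaf ((trees D ×ˢ trees D).image (fun p => node p.1 p.2))

/-- Consecutive-leaf pairs of a single tree. -/
def transitions (T : FBT) : Finset (List Bool × List Bool) :=
  (T.leaves.zip T.leaves.tail).toFinset

/-- The set `S(T_C)` of successive leaf transitions of the complete binary
tree of depth `D`. -/
def S (D : ℕ) : Finset (List Bool × List Bool) := (trees D).biUnion transitions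

/-- The left boundary of the complete binary tree of depth `D`. -/
def Bl (D : ℕ) : Finset (List Bool) :=
  (Finset.range (D+1)).image (fun k => List.replicate k false)

/-- The right boundary of the complete binary tree of depth `D`. -/
def Br (D : ℕ) : Finset (List Bool) :=
  (Finset.range (D+1)).image (fun k => List.replicate k true)

/-- The marginalisation dynamic-programming table (indexed from `n = 1`). -/
def M (S : Finset (List Bool × List Bool)) (Bl : Finset (List Bool))
    (w : ℕ → List Bool → ℝ) (mw : List Bool → ℝ) : ℕ → List Bool → ℝ
  | 0, _ => 0
  | 1, v => if v ∈ Bl then w 1 v * mw v else 0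
  | (n+2), v => w (n+2) v * mw v *
      ∑ p ∈ S.filter (fun p => p.2 = v), M S Bl w mw (n+1) p.1

/-- The Viterbi-style max-product dynamic-programming table. -/
def Mstar (S : Finset (List Bool × List Bool)) (Bl : Finset (List Bool))
    (w : ℕ → List Bool → NNReal) (mw : List Bool → NNReal) : ℕ → List Bool → NNReal
  | 0, _ => 0
  | 1, v => if v ∈ Bl then w 1 v * mw v else 0
  | (n+2), v => w (n+2) v * mw v *
      (S.filter (fun p => p.2 = v)).sup (fun p => Mstar S Bl w mw (n+1) p.1)

/-- The complete binary tree of depth `D`, as a full binary tree. -/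
def completeTree : ℕ → FBT
  | 0 => leaf
  | (D+1) => node (completeTree D) (completeTree D)

def fl : FBT → ℕ | leaf => 0 | node a _ => fl a + 1
def ll : FBT → ℕ | leaf => 0 | node _ b => ll b + 1

lemma leaves_ne_nil (T : FBT) : T.leaves ≠ [] := by
  induction T with
  | leaf => simp [leaves]
  | node a b iha ihb => simp [leaves, iha]

lemma head_leaves (T : FBT) : T.leaves.head (leaves_ne_nil T) = List.replicate T.fl false := by
  induction T with
  | leaf => simp [leaves, fl]
  | node a b iha ihb =>
    simp only [leaves]
    rw [List.head_append_of_ne_nil (by simp [leaves_ne_nil]),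
      List.head_map, iha, fl, List.replicate_succ']

lemma getLast_leaves (T : FBT) :
    T.leaves.getLast (leaves_ne_nil T) = List.replicate T.ll true := by
  induction T with
  | leaf => simp [leaves, ll]
  | node a b iha ihb =>
    simp only [leaves]
    rw [List.getLast_append_of_ne_nil (h₂ := by simp [leaves_ne_nil]),
      List.getLast_map, ihb, ll, List.replicate_succ']

lemma fl_le_depth (T : FBT) : T.fl ≤ T.depth := by
  induction T with
  | leaf => simp [fl, depth]
  | node a b iha ihb => simp [fl, depth]; omega

lemma ll_le_depth (T : FBT) : T.ll ≤ T.depth := by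
  induction T with
  | leaf => simp [ll, depth]
  | node a b iha ihb => simp [ll, depth]; omega

def lspine : ℕ → FBT | 0 => leaf | k+1 => node (lspine k) leaf
def rspine : ℕ → FBT | 0 => leaf | k+1 => node leaf (rspine k)

lemma depth_lspine (k : ℕ) : (lspine k).depth = k := by
  induction k with
  | zero => rfl
  | succ k ih => simp [lspine, depth, ih]

lemma fl_lspine (k : ℕ) : (lspine k).fl = k := by
  induction k with
  | zero => rfl
  | succ k ih => simp [lspine, fl, ih]

lemma depth_rspine (k : ℕ) : (rspine k).depth = k := by
  induction k with
  | zero => rfl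
  | succ k ih => simp [rspine, depth, ih]

lemma ll_rspine (k : ℕ) : (rspine k).ll = k := by
  induction k with
  | zero => rfl
  | succ k ih => simp [rspine, ll, ih]

lemma mem_trees {T : FBT} {D : ℕ} : T ∈ trees D ↔ T.depth ≤ D := by
  induction D generalizing T with
  | zero => cases T <;> simp [trees, depth]
  | succ D ih =>
    cases T with
    | leaf => simp [trees, depth]
    | node a b =>
      simp only [trees, Finset.mem_insert, Finset.mem_image, Finset.mem_product, Prod.exists]
      constructor
      · rintro (h | ⟨x, y, ⟨hx, hy⟩, h⟩)
        · exact absurd h (by simp)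
        · cases h
          simp [depth]
          exact ⟨ih.mp hx, ih.mp hy⟩
      · intro h
        simp [depth] at h
        exact Or.inr ⟨a, b, ⟨ih.mpr h.1, ih.mpr h.2⟩, rfl⟩

lemma zip_tail_append {α : Type*} (l₁ l₂ : List α) (h₁ : l₁ ≠ []) (h₂ : l₂ ≠ []) :
    (l₁ ++ l₂).zip (l₁ ++ l₂).tail =
      l₁.zip l₁.tail ++ (l₁.getLast h₁, l₂.head h₂) :: l₂.zip l₂.tail := by
  induction l₁ with
  | nil => simp at h₁
  | cons x t ih =>
    cases t with
    | nil =>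
      cases l₂ with
      | nil => simp at h₂
      | cons y s => simp [List.zip]
    | cons y s =>
      have h := ih (by simp)
      simp only [List.cons_append, List.tail_cons, List.zip_cons_cons] at h ⊢
      rw [List.getLast_cons (by simp : (y :: s : List α) ≠ []), h]

lemma transitions_node (a b : FBT) :
    transitions (node a b) =
      (transitions a).image (fun p => (p.1 ++ [false], p.2 ++ [false])) ∪
      (transitions b).image (fun p => (p.1 ++ [true], p.2 ++ [true])) ∪
      {(List.replicate a.ll true ++ [false], List.replicate b.fl false ++ [true])} := by
  have hA : a.leaves.map (· ++ [false]) ≠ [] := by simp [leaves_ne_nil]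
  have hB : b.leaves.map (· ++ [true]) ≠ [] := by simp [leaves_ne_nil]
  rw [transitions]
  simp only [leaves]
  rw [zip_tail_append _ _ hA hB]
  ext p
  simp only [List.toFinset_append, List.toFinset_cons, Finset.mem_union, Finset.mem_insert,
    Finset.mem_image, Finset.mem_singleton, transitions, List.mem_toFinset]
  rw [List.getLast_map, List.head_map, getLast_leaves, head_leaves,
    ← List.map_tail, ← List.map_tail, List.zip_map, List.zip_map]
  simp only [List.mem_map, Prod.map]
  constructor
  · rintro (⟨w, hw, rfl⟩ | (h | ⟨w, hw, rfl⟩))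
    · exact Or.inl (Or.inl ⟨w, hw, rfl⟩)
    · exact Or.inr h
    · exact Or.inl (Or.inr ⟨w, hw, rfl⟩)
  · rintro ((⟨w, hw, rfl⟩ | ⟨w, hw, rfl⟩) | h)
    · exact Or.inl ⟨w, hw, rfl⟩
    · exact Or.inr (Or.inr ⟨w, hw, rfl⟩)
    · exact Or.inr (Or.inl h)


end FBT

open FBT
/-- recursive decomposition of the successive leaf transitions,
`S(T_C) = S(T_C') ∪ S(T_C'') ∪ (B_r(T_C') × B_l(T_C''))`, where positions in
the left (right) subtree are embedded by appending a final `false` (`true`). -/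
theorem stmt4 (D : ℕ) :
    FBT.S (D + 1) =
      ((FBT.S D).image (fun p => (p.1 ++ [false], p.2 ++ [false]))) ∪
      ((FBT.S D).image (fun p => (p.1 ++ [true], p.2 ++ [true]))) ∪
      ((FBT.Br D ×ˢ FBT.Bl D).image (fun p => (p.1 ++ [false], p.2 ++ [true]))) := by
  ext p
  simp only [S, trees, Finset.mem_biUnion, Finset.mem_insert, Finset.mem_union,
    Finset.mem_image, Finset.mem_product, Prod.exists]
  constructor
  · rintro ⟨T, hT, hp⟩
    rcases hT with rfl | ⟨x, y, ⟨hx, hy⟩, rfl⟩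
    · simp [transitions, leaves] at hp
    · rw [transitions_node] at hp
      simp only [Finset.mem_union, Finset.mem_image, Finset.mem_singleton, Prod.exists] at hp
      rcases hp with ((⟨u, v, huv, rfl⟩ | ⟨u, v, huv, rfl⟩) | rfl)
      · exact Or.inl (Or.inl ⟨u, v, ⟨x, hx, huv⟩, rfl⟩)
      · exact Or.inl (Or.inr ⟨u, v, ⟨y, hy, huv⟩, rfl⟩)
      · refine Or.inr ⟨List.replicate x.ll true, List.replicate y.fl false, ⟨?_, ?_⟩, rfl⟩
        · exact Finset.mem_image.mpr ⟨x.ll, Finset.mem_range.mpr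
            (Nat.lt_succ_of_le ((ll_le_depth x).trans (mem_trees.mp hx))), rfl⟩
        · exact Finset.mem_image.mpr ⟨y.fl, Finset.mem_range.mpr
            (Nat.lt_succ_of_le ((fl_le_depth y).trans (mem_trees.mp hy))), rfl⟩
  · rintro ((⟨u, v, ⟨T, hT, hT'⟩, rfl⟩ | ⟨u, v, ⟨T, hT, hT'⟩, rfl⟩) | ⟨u, v, ⟨hu, hv⟩, rfl⟩)
    · refine ⟨node T T, Or.inr ⟨T, T, ⟨hT, hT⟩, rfl⟩, ?_⟩
      rw [transitions_node]
      exact Finset.mem_union.mpr (Or.inl (Finset.mem_union.mpr (Or.inl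
        (Finset.mem_image.mpr ⟨(u, v), hT', rfl⟩))))
    · refine ⟨node T T, Or.inr ⟨T, T, ⟨hT, hT⟩, rfl⟩, ?_⟩
      rw [transitions_node]
      exact Finset.mem_union.mpr (Or.inl (Finset.mem_union.mpr (Or.inr
        (Finset.mem_image.mpr ⟨(u, v), hT', rfl⟩))))
    · obtain ⟨j, hj, rfl⟩ := Finset.mem_image.mp hu
      obtain ⟨k, hk, rfl⟩ := Finset.mem_image.mp hv
      rw [Finset.mem_range] at hj hk
      refine ⟨node (rspine j) (lspine k), Or.inr ⟨_, _, ⟨?_, ?_⟩, rfl⟩, ?_⟩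
      · exact mem_trees.mpr (by rw [depth_rspine]; omega)
      · exact mem_trees.mpr (by rw [depth_lspine]; omega)
      · rw [transitions_node, ll_rspine, fl_lspine]
        simp
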